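/- If real random matrices Z and W are orthogonal projectors with probability 1 and 𝔼[Z], 𝔼[W] are positive definite, then every eigenvalue of 𝔼[W ⊗ Z] lies in the interval (0, 1]; in particular λ_min(𝔼[W ⊗ Z]) > 0 and λ_max(𝔼[W ⊗ Z]) ≤ 1. -/

import Mathlib

open scoped Matrix Kronecker BigOperators
open MeasureTheory
open scoped ProbabilityTheory

/-- The t-product of two tubal matrices (third-order tensors given by their
frontal slices): `(A*B)_k = ∑_{k'} A_{k-k'} B_{k'}` (circular convolution of slices),
equivalently `A*B = fold(bcirc(A) · unfold(B))`. -/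
def tProd {α β γ : Type*} [Fintype β] {l : ℕ}
    (A : Fin l → Matrix α β ℝ) (B : Fin l → Matrix β γ ℝ) :
    Fin l → Matrix α γ ℝ :=
  fun k => ∑ k' : Fin l, A (k - k') * B k'

/-- The block-circulant matrix of a tubal matrix: the `(a,b)` block is `A_{a-b mod l}`. -/
def bcirc {α β : Type*} {l : ℕ} (A : Fin l → Matrix α β ℝ) :
    Matrix (α × Fin l) (β × Fin l) ℝ :=
  Matrix.of fun p q => A (p.2 - q.2) p.1 q.1

/-- Squared Frobenius norm of a tubal matrix (third-order tensor). -/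
def frobSq {α β : Type*} [Fintype α] [Fintype β] {l : ℕ}
    (A : Fin l → Matrix α β ℝ) : ℝ :=
  ∑ k, ∑ i, ∑ j, (A k i j) ^ 2

/-- Squared Frobenius norm of a real matrix. -/
def matFrobSq {α β : Type*} [Fintype α] [Fintype β] (M : Matrix α β ℝ) : ℝ :=
  ∑ i, ∑ j, (M i j) ^ 2

/-- Tensor transpose under the t-product: transpose each frontal slice and reverse
the order of slices 2 through l, i.e. `(Aᵀ)_k = (A_{-k})ᵀ`. -/
def ttr {α β : Type*} {l : ℕ} (A : Fin l → Matrix α β ℝ) :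
    Fin l → Matrix β α ℝ :=
  fun k => (A (-k))ᵀ

/-- Slice transpose: transpose each frontal slice (no reversal). -/
def sliceT {α β : Type*} {l : ℕ} (A : Fin l → Matrix α β ℝ) :
    Fin l → Matrix β α ℝ :=
  fun k => (A k)ᵀ

/-- Reverse: reverse the order of frontal slices 2 through l. -/
def trev {α β : Type*} {l : ℕ} (A : Fin l → Matrix α β ℝ) :
    Fin l → Matrix α β ℝ :=
  fun k => A (-k)

/-- t-Kronecker product of tubal matrices: `(A ⊗_t B)_k = ∑_{k'} A_{k-k'} ⊗ B_{k'}`,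
the block tubal matrix whose `(i,j)` block is `A_{(i,j,:)} * B`. -/
def tkron {α β γ δ : Type*} {l : ℕ}
    (A : Fin l → Matrix α β ℝ) (B : Fin l → Matrix γ δ ℝ) :
    Fin l → Matrix (α × γ) (β × δ) ℝ :=
  fun k => ∑ k' : Fin l, (A (k - k')) ⊗ₖ (B k')

/-- The identity tubal matrix: first frontal slice is the identity, others zero. -/
def tId (α : Type*) [DecidableEq α] [Fintype α] (l : ℕ) [NeZero l] :
    Fin l → Matrix α α ℝ :=
  fun k => if k = 0 then (1 : Matrix α α ℝ) else 0

/-- t-vectorization: stack the lateral slices of a tubal matrix vertically. -/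
def vecT {α β : Type*} {l : ℕ} (B : Fin l → Matrix α β ℝ) :
    Fin l → Matrix (β × α) (Fin 1) ℝ :=
  fun k => Matrix.of fun p _ => B k p.2 p.1

/-- Discrete Fourier transform along the third dimension:
`Â_k = ∑_j exp(-2πi·jk/l) A_j`. -/
noncomputable def dft {α β : Type*} {l : ℕ} (A : Fin l → Matrix α β ℝ) :
    Fin l → Matrix α β ℂ :=
  fun k => ∑ j : Fin l,
    Complex.exp (-(2 * (Real.pi : ℂ) * Complex.I * (j.1 : ℂ) * (k.1 : ℂ)) / (l : ℂ)) •
      (A j).map Complex.ofReal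

/-- Squared Frobenius norm of a complex matrix. -/
def matFrobSqC {α β : Type*} [Fintype α] [Fintype β] (M : Matrix α β ℂ) : ℝ :=
  ∑ i, ∑ j, Complex.normSq (M i j)

section AuxProjKron
open Matrix

lemma dotProduct_self_nonneg' {N : Type*} [Fintype N] (v : N → ℝ) : 0 ≤ v ⬝ᵥ v :=
  Finset.sum_nonneg fun i _ => mul_self_nonneg _

lemma dotProduct_self_pos' {N : Type*} [Fintype N] {v : N → ℝ} (hv : v ≠ 0) : 0 < v ⬝ᵥ v :=
  lt_of_le_of_ne (dotProduct_self_nonneg' v)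
    fun h => hv (dotProduct_self_eq_zero.mp h.symm)

lemma posDef_kronecker {m n : ℕ} {A : Matrix (Fin m) (Fin m) ℝ} {B : Matrix (Fin n) (Fin n) ℝ}
    (hA : A.PosDef) (hB : B.PosDef) : (A ⊗ₖ B).PosDef := by
  exact hA.kronecker hB

lemma proj_dot_bounds {N : Type*} [Fintype N] [DecidableEq N] {P : Matrix N N ℝ}
    (hPt : Pᵀ = P) (hPP : P * P = P) (v : N → ℝ) :
    0 ≤ v ⬝ᵥ P *ᵥ v ∧ v ⬝ᵥ P *ᵥ v ≤ v ⬝ᵥ v := by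
  have key : ∀ (Q : Matrix N N ℝ), Qᵀ = Q → Q * Q = Q → 0 ≤ v ⬝ᵥ Q *ᵥ v := by
    intro Q hQt hQQ
    have h : v ⬝ᵥ Q *ᵥ v = (Q *ᵥ v) ⬝ᵥ (Q *ᵥ v) := by
      nth_rewrite 1 [← hQQ]
      rw [← mulVec_mulVec, dotProduct_mulVec, ← hQt, vecMul_transpose, hQt]
    rw [h]
    exact dotProduct_self_nonneg' _
  refine ⟨key P hPt hPP, ?_⟩
  have h1 : (1 - P)ᵀ = 1 - P := by rw [transpose_sub, transpose_one, hPt]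
  have h2 : (1 - P) * (1 - P) = 1 - P := by
    rw [sub_mul, one_mul, mul_sub, mul_one, hPP]; abel
  have h3 := key (1 - P) h1 h2
  rw [sub_mulVec, dotProduct_sub, one_mulVec] at h3
  linarith

end AuxProjKron

open Matrix in
theorem eigenvalues_expected_kron_projectors
    {Ω : Type*} [MeasureSpace Ω] [IsProbabilityMeasure (ℙ : Measure Ω)]
    {n m : ℕ}
    (Z : Ω → Matrix (Fin n) (Fin n) ℝ) (W : Ω → Matrix (Fin m) (Fin m) ℝ)
    (hZproj : ∀ᵐ ω, (Z ω)ᵀ = Z ω ∧ Z ω * Z ω = Z ω)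
    (hWproj : ∀ᵐ ω, (W ω)ᵀ = W ω ∧ W ω * W ω = W ω)
    (hInd : ProbabilityTheory.IndepFun
        (fun ω (i j : Fin n) => Z ω i j) (fun ω (i j : Fin m) => W ω i j))
    (hZint : ∀ i j, Integrable fun ω => Z ω i j)
    (hWint : ∀ i j, Integrable fun ω => W ω i j)
    (hKint : ∀ p q, Integrable fun ω => (W ω ⊗ₖ Z ω) p q)
    (hEZ : (Matrix.of fun i j => ∫ ω, Z ω i j).PosDef)
    (hEW : (Matrix.of fun i j => ∫ ω, W ω i j).PosDef) :
    ∀ (μ : ℝ) (v : Fin m × Fin n → ℝ), v ≠ 0 →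
      (Matrix.of fun p q => ∫ ω, (W ω ⊗ₖ Z ω) p q).mulVec v = μ • v →
      0 < μ ∧ μ ≤ 1 := by
  intro μ v hv hμv
  set M : Matrix (Fin m × Fin n) (Fin m × Fin n) ℝ :=
    Matrix.of fun p q => ∫ ω, (W ω ⊗ₖ Z ω) p q with hM
  have hMeq : M = (Matrix.of fun i j => ∫ ω, W ω i j) ⊗ₖ (Matrix.of fun i j => ∫ ω, Z ω i j) := by
    rw [hM]
    ext ⟨p1, p2⟩ ⟨q1, q2⟩
    simp only [Matrix.of_apply, Matrix.kroneckerMap_apply]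
    have hind : ProbabilityTheory.IndepFun (fun ω => W ω p1 q1) (fun ω => Z ω p2 q2) ℙ :=
      ProbabilityTheory.IndepFun.symm <| hInd.comp
        ((measurable_pi_apply q2).comp (measurable_pi_apply p2))
        ((measurable_pi_apply q1).comp (measurable_pi_apply p1))
    exact hind.integral_mul_eq_mul_integral (hWint p1 q1).aestronglyMeasurable (hZint p2 q2).aestronglyMeasurable
  have hMpos : M.PosDef := hMeq ▸ posDef_kronecker hEW hEZ
  have hint : ∀ p q, Integrable (fun ω => v p * ((W ω ⊗ₖ Z ω) p q * v q)) := fun p q =>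
    ((hKint p q).mul_const (v q)).const_mul (v p)
  have hexp : ∀ ω, v ⬝ᵥ (W ω ⊗ₖ Z ω) *ᵥ v = ∑ p, ∑ q, v p * ((W ω ⊗ₖ Z ω) p q * v q) := by
    intro ω; simp [dotProduct, Matrix.mulVec, Finset.mul_sum]
  have hquad : v ⬝ᵥ M *ᵥ v = ∫ ω, v ⬝ᵥ (W ω ⊗ₖ Z ω) *ᵥ v := by
    have lhs : v ⬝ᵥ M *ᵥ v
        = ∑ p, ∑ q, v p * ((∫ ω, (W ω ⊗ₖ Z ω) p q) * v q) := by
      simp [hM, dotProduct, Matrix.mulVec, Finset.mul_sum]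
    rw [lhs]
    simp_rw [hexp]
    rw [integral_finset_sum _ fun p _ => integrable_finset_sum _ fun q _ => hint p q]
    refine Finset.sum_congr rfl fun p _ => ?_
    rw [integral_finset_sum _ fun q _ => hint p q]
    refine Finset.sum_congr rfl fun q _ => ?_
    rw [integral_const_mul, integral_mul_const]
  have hquadInt : Integrable (fun ω => v ⬝ᵥ (W ω ⊗ₖ Z ω) *ᵥ v) := by
    simp_rw [hexp]
    exact integrable_finset_sum _ fun p _ => integrable_finset_sum _ fun q _ => hint p q
  have hbound : ∀ᵐ ω, v ⬝ᵥ (W ω ⊗ₖ Z ω) *ᵥ v ≤ v ⬝ᵥ v := by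
    filter_upwards [hZproj, hWproj] with ω hZω hWω
    obtain ⟨hZt, hZZ⟩ := hZω
    obtain ⟨hWt, hWW⟩ := hWω
    have ht : (W ω ⊗ₖ Z ω)ᵀ = W ω ⊗ₖ Z ω := by
      rw [← Matrix.kroneckerMap_transpose, hWt, hZt]
    have hsq : (W ω ⊗ₖ Z ω) * (W ω ⊗ₖ Z ω) = W ω ⊗ₖ Z ω := by
      rw [← Matrix.mul_kronecker_mul, hWW, hZZ]
    exact (proj_dot_bounds ht hsq v).2
  have hle : v ⬝ᵥ M *ᵥ v ≤ v ⬝ᵥ v := by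
    rw [hquad]
    calc ∫ ω, v ⬝ᵥ (W ω ⊗ₖ Z ω) *ᵥ v ≤ ∫ _ω, v ⬝ᵥ v :=
          integral_mono_ae hquadInt (integrable_const _) hbound
      _ = v ⬝ᵥ v := by simp
  have heig : v ⬝ᵥ M *ᵥ v = μ * (v ⬝ᵥ v) := by
    rw [hμv, dotProduct_smul, smul_eq_mul]
  have hvv : 0 < v ⬝ᵥ v := dotProduct_self_pos' hv
  have hpos : 0 < v ⬝ᵥ M *ᵥ v := by
    have := (posDef_iff_dotProduct_mulVec.mp hMpos).2 hv
    simpa using this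
  constructor
  · nlinarith [heig, hpos, hvv]
  · nlinarith [heig, hle, hvv]
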